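/- Let (Q_t)_{t≥0} be the transition semigroup of a measure-valued branching process on M(E) satisfying Condition 2.6. Then ‖Q_t(μ,·) − δ₀‖_var = 2(1 − e^{−μ(V̄_t)}) for every t > 0 and μ ∈ M(E), where δ₀ is the Dirac measure at the zero measure 0 ∈ M(E); moreover, lim_{t→∞} ‖Q_t(μ,·) − δ₀‖_var = 0 for every μ ∈ M(E) if and only if lim_{t→∞} V̄_t(x) = 0 for every x ∈ E. -/

import Mathlib

open MeasureTheory Filter Set
open scoped ENNReal NNReal Topology

noncomputable section

namespace DW

section TV

variable {α : Type*} [MeasurableSpace α]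

/-- The total variation measure `|μ - ν|` of the difference of two finite measures. -/
def tvMeasure (μ ν : Measure α) : Measure α := (μ - ν) + (ν - μ)

/-- The total variation norm `‖μ - ν‖_var` of the difference of two finite measures. -/
def tvNorm (μ ν : Measure α) : ℝ := (tvMeasure μ ν Set.univ).toReal

/-- `P` is a coupling of the probability measures `Q1` and `Q2`. -/
def IsCoupling (P : Measure (α × α)) (Q1 Q2 : Measure α) : Prop :=
  IsProbabilityMeasure P ∧ P.map Prod.fst = Q1 ∧ P.map Prod.snd = Q2

/-- Convolution of two measures on an additive monoid. -/
def mconv [Add α] (P1 P2 : Measure α) : Measure α :=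
  (P1.prod P2).map fun p => p.1 + p.2

end TV

/-- Supremum norm of a real valued function. -/
def supNorm {β : Type*} (f : β → ℝ) : ℝ := ⨆ x, |f x|

section Defs

variable {E : Type*} [MeasurableSpace E]

/-- The pairing `μ(f) = ∫_E f dμ`. -/
def pair (μ : FiniteMeasure E) (f : E → ℝ) : ℝ := ∫ x, f x ∂(μ : Measure E)

/-- `f` belongs to `B(E)⁺`: bounded nonnegative Borel functions. -/
def BddBorelNN (f : E → ℝ) : Prop :=
  Measurable f ∧ (∃ C, ∀ x, f x ≤ C) ∧ ∀ x, 0 ≤ f x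

/-- `f` belongs to `B(E)`: bounded Borel functions. -/
def BddBorel (f : E → ℝ) : Prop := Measurable f ∧ ∃ C, ∀ x, |f x| ≤ C

/-- The Dirac measure `δ_x` as a finite measure. -/
def diracFM (x : E) : FiniteMeasure E := ⟨Measure.dirac x, inferInstance⟩

variable [MeasurableSpace (FiniteMeasure E)]

/-- The cumulant semigroup `V_t f(x) = -log ∫ e^{-ν(f)} Q_t(δ_x, dν)`. -/
def cumulant (Q : ℝ → FiniteMeasure E → Measure (FiniteMeasure E))
    (t : ℝ) (f : E → ℝ) (x : E) : ℝ :=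
  - Real.log (∫ ν, Real.exp (-(pair ν f)) ∂(Q t (diracFM x)))

/-- The first-moment kernel `π_t f(x) = ∫ ν(f) Q_t(δ_x, dν)`. -/
def momentKernel (Q : ℝ → FiniteMeasure E → Measure (FiniteMeasure E))
    (t : ℝ) (f : E → ℝ) (x : E) : ℝ :=
  ∫ ν, pair ν f ∂(Q t (diracFM x))

/-- `(Q_t)` is the transition semigroup of a measure-valued branching process. -/
structure IsMBSemigroup (Q : ℝ → FiniteMeasure E → Measure (FiniteMeasure E)) : Prop where
  meas : ∀ t, 0 ≤ t → ∀ s : Set (FiniteMeasure E), MeasurableSet s →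
    Measurable fun μ => Q t μ s
  prob : ∀ t, 0 ≤ t → ∀ μ, IsProbabilityMeasure (Q t μ)
  init : ∀ μ, Q 0 μ = Measure.dirac μ
  chapman : ∀ s, 0 ≤ s → ∀ t, 0 ≤ t → ∀ μ, (Q s μ).bind (Q t) = Q (s + t) μ
  branching : ∀ t, 0 ≤ t → ∀ μ f, BddBorelNN f →
    ∫ ν, Real.exp (-(pair ν f)) ∂(Q t μ) = Real.exp (-(pair μ (cumulant Q t f)))

/-- Condition 2.1: the first moments exist, are bounded kernels, and satisfy the
first-moment formula. -/
def Condition21 (Q : ℝ → FiniteMeasure E → Measure (FiniteMeasure E)) : Prop :=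
  ∀ t, 0 ≤ t → ∀ f, BddBorelNN f →
    (∃ C, ∀ x, momentKernel Q t f x ≤ C) ∧
    ∀ μ : FiniteMeasure E, ∫ ν, pair ν f ∂(Q t μ) = pair μ (momentKernel Q t f)

/-- Condition 2.6: for each `t > 0` the increasing limit
`V̄_t(x) = lim_{λ→∞} V_t(λ 1)(x)` exists and is bounded on `E`. -/
def Condition26 (Q : ℝ → FiniteMeasure E → Measure (FiniteMeasure E))
    (Vbar : ℝ → E → ℝ) : Prop :=
  ∀ t, 0 < t →
    (∀ x, Tendsto (fun lam : ℝ => cumulant Q t (fun _ => lam) x) atTop (𝓝 (Vbar t x))) ∧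
    ∃ C, ∀ x, Vbar t x ≤ C

/-- The Wasserstein distance, relative to the total variation distance on `M(E)`,
between two probability measures on `M(E)`. -/
def W1 (Q1 Q2 : Measure (FiniteMeasure E)) : ℝ :=
  sInf { r | ∃ P, IsCoupling P Q1 Q2 ∧
    r = ∫ p, tvNorm ((p.1 : FiniteMeasure E) : Measure E) ((p.2 : FiniteMeasure E) : Measure E) ∂P }

/-- The Lipschitz constant of `F : M(E) → ℝ` relative to the total variation distance. -/
def Lvar (F : FiniteMeasure E → ℝ) : ℝ :=
  sSup { r | ∃ μ ν : FiniteMeasure E, μ ≠ ν ∧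
    r = |F μ - F ν| / tvNorm (μ : Measure E) (ν : Measure E) }

/-- `(N_t)` is a skew convolution semigroup associated with `(Q_t)`. -/
def IsSCSemigroup (Q : ℝ → FiniteMeasure E → Measure (FiniteMeasure E))
    (N : ℝ → Measure (FiniteMeasure E)) : Prop :=
  (∀ t, 0 ≤ t → IsProbabilityMeasure (N t)) ∧
  ∀ r, 0 ≤ r → ∀ t, 0 ≤ t → N (r + t) = mconv ((N r).bind (Q t)) (N t)

/-- `(K_t)_{t>0}` is an entrance law of probability measures for `(Q_t)`. -/
def IsEntranceLaw (Q : ℝ → FiniteMeasure E → Measure (FiniteMeasure E))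
    (K : ℝ → Measure (FiniteMeasure E)) : Prop :=
  (∀ r, 0 < r → IsProbabilityMeasure (K r)) ∧
  ∀ r, 0 < r → ∀ t, 0 ≤ t → (K r).bind (Q t) = K (r + t)

/-- `I_s(K, f) = -log ∫ e^{-ν(f)} K_s(dν)`. -/
def IK (K : ℝ → Measure (FiniteMeasure E)) (s : ℝ) (f : E → ℝ) : ℝ :=
  - Real.log (∫ ν, Real.exp (-(pair ν f)) ∂(K s))

/-- The kernel `γ(x, dy) = η(x, dy) + ∫ ν_x(dy) H(x, dν)`. -/
def gammaKer (η : E → Measure E) (H : E → Measure (FiniteMeasure E)) (x : E) :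
    Measure E :=
  η x + (H x).bind fun ν => ((ν : FiniteMeasure E) : Measure E).restrict {x}ᶜ

/-- The branching mechanism
`φ(x,f) = b(x)f(x) + c(x)f(x)² - γ(x,f) + ∫ [e^{-ν(f)} - 1 + ν(f)] H(x,dν)`. -/
def phi (b c : E → ℝ) (η : E → Measure E) (H : E → Measure (FiniteMeasure E))
    (x : E) (f : E → ℝ) : ℝ :=
  b x * f x + c x * f x ^ 2 - (∫ y, f y ∂(gammaKer η H x)) +
    ∫ ν, (Real.exp (-(pair ν f)) - 1 + pair ν f) ∂(H x)

/-- The local projection `φ₁` of the branching mechanism `φ`. -/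
def phi1 (b c : E → ℝ) (η : E → Measure E) (H : E → Measure (FiniteMeasure E))
    (x : E) (z : ℝ) : ℝ :=
  (b x - (gammaKer η H x Set.univ).toReal) * z + c x * z ^ 2 +
    ∫ ν, (Real.exp (-(z * (((ν : FiniteMeasure E) : Measure E) {x}).toReal)) - 1 +
      z * (((ν : FiniteMeasure E) : Measure E) {x}).toReal) ∂(H x)

/-- A spatially independent branching mechanism
`φ_*(z) = b_* z + c_* z² + ∫ (e^{-zu} - 1 + zu) m_*(du)`. -/
def phiStar (bs cs : ℝ) (m : Measure ℝ) (z : ℝ) : ℝ :=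
  bs * z + cs * z ^ 2 + ∫ u, (Real.exp (-(z * u)) - 1 + z * u) ∂m

/-- The data `(b_*, c_*, m_*)` of a spatially independent branching mechanism. -/
def IsBranchingMechanismStar (bs cs : ℝ) (m : Measure ℝ) : Prop :=
  0 ≤ cs ∧ m {u | u ≤ 0} = 0 ∧ (∫⁻ u, ENNReal.ofReal (min u (u ^ 2)) ∂m) < ⊤

/-- Grey's condition for `φ_*`. -/
def GreyCondition (bs cs : ℝ) (m : Measure ℝ) : Prop :=
  ∃ z0 : ℝ, 0 < z0 ∧ (∀ z, z0 ≤ z → 0 < phiStar bs cs m z) ∧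
    IntegrableOn (fun z => (phiStar bs cs m z)⁻¹) (Set.Ioi z0)

/-- `v` is the cumulant semigroup of the CB-process with branching mechanism `φ_*`:
the unique nonnegative solution of `∂_t v_t(λ) = -φ_*(v_t(λ))`, `v_0(λ) = λ`. -/
def IsCBCumulant (bs cs : ℝ) (m : Measure ℝ) (v : ℝ → ℝ → ℝ) : Prop :=
  ∀ lam, 0 ≤ lam → v 0 lam = lam ∧
    ∀ t, 0 ≤ t → 0 ≤ v t lam ∧ HasDerivAt (fun s => v s lam) (-(phiStar bs cs m (v t lam))) t

/-- `(P_t)` is the transition semigroup of a Borel right process: a semigroup of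
Markov probability kernels on `E`. -/
structure IsMarkovSemigroup (P : ℝ → E → Measure E) : Prop where
  meas : ∀ t, 0 ≤ t → ∀ s : Set E, MeasurableSet s → Measurable fun x => P t x s
  prob : ∀ t, 0 ≤ t → ∀ x, IsProbabilityMeasure (P t x)
  init : ∀ x, P 0 x = Measure.dirac x
  chapman : ∀ s, 0 ≤ s → ∀ t, 0 ≤ t → ∀ x, (P s x).bind (P t) = P (s + t) x

/-- `π` is the first-moment semigroup of the `(ξ,φ)`-superprocess: the unique
locally bounded nonnegative solution of
`π_t f(x) = P_t f(x) + ∫_0^t P_{t-s}((γ - b) π_s f)(x) ds`. -/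
def IsMomentSemigroup (P : ℝ → E → Measure E) (b : E → ℝ) (γ : E → Measure E)
    (π : ℝ → (E → ℝ) → E → ℝ) : Prop :=
  (∀ t, 0 ≤ t → ∀ f, BddBorelNN f → ∀ x, 0 ≤ π t f x) ∧
  (∀ f, BddBorelNN f → ∀ T, 0 ≤ T → ∃ C, ∀ t ∈ Set.Icc (0 : ℝ) T, ∀ x, π t f x ≤ C) ∧
  ∀ f, BddBorelNN f → ∀ t, 0 ≤ t → ∀ x,
    π t f x = (∫ y, f y ∂(P t x)) +
      ∫ s in Set.Ioc (0 : ℝ) t, ∫ y, ((∫ z, π s f z ∂(γ y)) - b y * π s f y) ∂(P (t - s) x)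

/-- The data of a `(ξ,φ)`-superprocess: the underlying Markov semigroup `P`, the
branching mechanism parameters `b`, `c`, `η`, `H`, the cumulant semigroup `V`
(the unique locally bounded nonnegative solution of the evolution equation), and
the transition semigroup `Q` on `M(E)` determined by the Laplace functional. -/
structure Superprocess (P : ℝ → E → Measure E) (b c : E → ℝ)
    (η : E → Measure E) (H : E → Measure (FiniteMeasure E))
    (V : ℝ → (E → ℝ) → E → ℝ)
    (Q : ℝ → FiniteMeasure E → Measure (FiniteMeasure E)) : Prop where
  markov : IsMarkovSemigroup P
  hb : BddBorel b
  hc : BddBorel c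
  hcnn : ∀ x, 0 ≤ c x
  hηmeas : ∀ s : Set E, MeasurableSet s → Measurable fun x => η x s
  hηbdd : ∃ C : ℝ≥0, ∀ x, η x Set.univ ≤ (C : ℝ≥0∞)
  hHmeas : ∀ s : Set (FiniteMeasure E), MeasurableSet s → Measurable fun x => H x s
  hHzero : ∀ x, H x {0} = 0
  hHsf : ∀ x, SigmaFinite (H x)
  hHmom : ∃ C : ℝ≥0, ∀ x,
    (∫⁻ ν, (min (ν.mass : ℝ≥0∞) ((ν.mass : ℝ≥0∞) ^ 2) +
      ((ν : FiniteMeasure E) : Measure E) {x}ᶜ) ∂(H x)) ≤ (C : ℝ≥0∞)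
  hVnn : ∀ t, 0 ≤ t → ∀ f, BddBorelNN f → ∀ x, 0 ≤ V t f x
  hVbdd : ∀ f, BddBorelNN f → ∀ T, 0 ≤ T → ∃ C, ∀ t ∈ Set.Icc (0 : ℝ) T, ∀ x, V t f x ≤ C
  hVeq : ∀ f, BddBorelNN f → ∀ t, 0 ≤ t → ∀ x,
    V t f x = (∫ y, f y ∂(P t x)) -
      ∫ s in Set.Ioc (0 : ℝ) t, ∫ y, phi b c η H y (V s f) ∂(P (t - s) x)
  hQmeas : ∀ t, 0 ≤ t → ∀ s : Set (FiniteMeasure E), MeasurableSet s →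
    Measurable fun μ => Q t μ s
  hQprob : ∀ t, 0 ≤ t → ∀ μ, IsProbabilityMeasure (Q t μ)
  hQlaplace : ∀ t, 0 ≤ t → ∀ μ f, BddBorelNN f →
    ∫ ν, Real.exp (-(pair ν f)) ∂(Q t μ) = Real.exp (-(pair μ (V t f)))

end Defs

end DW
namespace DW


section Aux

variable {E : Type*} [TopologicalSpace E] [MeasurableSpace E] [BorelSpace E]
    [StandardBorelSpace E]
    [MeasurableSpace (FiniteMeasure E)] [BorelSpace (FiniteMeasure E)]

lemma tv_sub_dirac {α : Type*} [MeasurableSpace α] (P : Measure α) [IsProbabilityMeasure P]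
    (a : α) (ha : MeasurableSet ({a} : Set α)) :
    P - Measure.dirac a = P.restrict {a}ᶜ := by
  apply le_antisymm
  · apply Measure.sub_le_of_le_add
    rw [Measure.le_iff]
    intro s hs
    have h2 : P (s ∩ {a}) ≤ Measure.dirac a s := by
      by_cases h : a ∈ s
      · rw [Measure.dirac_apply_of_mem h]
        exact (measure_mono (subset_univ _)).trans_eq measure_univ
      · rw [Set.inter_singleton_eq_empty.mpr h]; simp
    calc P s = P (s ∩ {a}ᶜ) + P (s \ {a}ᶜ) := (measure_inter_add_diff s ha.compl).symm
      _ = P (s ∩ {a}ᶜ) + P (s ∩ {a}) := by rw [Set.diff_compl]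
      _ ≤ (P.restrict {a}ᶜ + Measure.dirac a) s := by
          rw [Measure.add_apply, Measure.restrict_apply hs]
          exact add_le_add le_rfl h2
  · rw [Measure.sub_def]
    apply le_sInf
    rintro d hd
    rw [Measure.le_iff]
    intro s hs
    have h1 : P (s ∩ {a}ᶜ) ≤ d (s ∩ {a}ᶜ) + Measure.dirac a (s ∩ {a}ᶜ) := by
      have := hd (s ∩ {a}ᶜ)
      simpa using this
    have h2 : Measure.dirac a (s ∩ {a}ᶜ) = 0 := by
      rw [Measure.dirac_apply' _ (hs.inter ha.compl)]
      simp
    rw [Measure.restrict_apply hs]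
    calc P (s ∩ {a}ᶜ) ≤ d (s ∩ {a}ᶜ) := by rw [h2, add_zero] at h1; exact h1
      _ ≤ d s := measure_mono Set.inter_subset_left

lemma tv_dirac_sub {α : Type*} [MeasurableSpace α] (P : Measure α) [IsProbabilityMeasure P]
    (a : α) (ha : MeasurableSet ({a} : Set α)) :
    Measure.dirac a - P = (1 - P {a}) • Measure.dirac a := by
  apply le_antisymm
  · apply Measure.sub_le_of_le_add
    rw [Measure.le_iff]
    intro s hs
    by_cases h : a ∈ s
    · rw [Measure.dirac_apply_of_mem h, Measure.add_apply, Measure.smul_apply,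
        Measure.dirac_apply_of_mem h, smul_eq_mul, mul_one]
      have hPa : P {a} ≤ 1 := by exact prob_le_one
      calc (1 : ℝ≥0∞) = (1 - P {a}) + P {a} := (tsub_add_cancel_of_le hPa).symm
        _ ≤ (1 - P {a}) + P s := add_le_add le_rfl (measure_mono (singleton_subset_iff.mpr h))
    · rw [Measure.dirac_apply' _ hs, Set.indicator_of_notMem h]
      exact zero_le
  · rw [Measure.sub_def]
    apply le_sInf
    rintro d hd
    rw [Measure.le_iff]
    intro s hs
    rw [Measure.smul_apply, smul_eq_mul]
    by_cases h : a ∈ s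
    · rw [Measure.dirac_apply_of_mem h, mul_one]
      have h1 : (1 : ℝ≥0∞) ≤ d {a} + P {a} := by
        have := hd {a}
        rwa [Measure.add_apply, Measure.dirac_apply_of_mem (Set.mem_singleton a)] at this
      have h2 : (1 : ℝ≥0∞) - P {a} ≤ d {a} := tsub_le_iff_right.mpr h1
      exact h2.trans (measure_mono (singleton_subset_iff.mpr h))
    · rw [Measure.dirac_apply' _ hs, Set.indicator_of_notMem h, mul_zero]
      exact zero_le

lemma tvNorm_dirac {α : Type*} [MeasurableSpace α] (P : Measure α) [IsProbabilityMeasure P]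
    (a : α) (ha : MeasurableSet ({a} : Set α)) :
    tvNorm P (Measure.dirac a) = 2 * (1 - (P {a}).toReal) := by
  have hPa : P {a} ≤ 1 := by exact prob_le_one
  have key : tvMeasure P (Measure.dirac a) Set.univ = (1 - P {a}) + (1 - P {a}) := by
    rw [tvMeasure, Measure.add_apply, tv_sub_dirac P a ha, tv_dirac_sub P a ha,
      Measure.restrict_apply MeasurableSet.univ, Set.univ_inter,
      measure_compl ha (measure_ne_top _ _), measure_univ, Measure.smul_apply,
      smul_eq_mul]
    congr 1
    rw [show (Measure.dirac a) Set.univ = 1 from measure_univ, mul_one]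
  rw [tvNorm, key, ENNReal.toReal_add (by finiteness) (by finiteness),
    ENNReal.toReal_sub_of_le hPa ENNReal.one_ne_top]
  simp
  ring

lemma continuous_diracFM : Continuous (diracFM : E → FiniteMeasure E) := by
  rw [continuous_iff_continuousAt]
  intro x
  unfold ContinuousAt
  rw [FiniteMeasure.tendsto_iff_forall_integral_tendsto]
  intro f
  have hh : ∀ y : E, ∫ z, f z ∂((diracFM y : FiniteMeasure E) : Measure E) = f y := fun y => by
    show ∫ z, f z ∂(Measure.dirac y) = f y
    exact integral_dirac _ y
  simp_rw [hh]
  exact f.continuous.continuousAt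

lemma measurable_diracFM : Measurable (diracFM : E → FiniteMeasure E) :=
  continuous_diracFM.measurable

lemma measurableSet_zeroFM : MeasurableSet ({0} : Set (FiniteMeasure E)) := by
  have h : ({0} : Set (FiniteMeasure E)) = (fun ν : FiniteMeasure E => ν.mass) ⁻¹' {0} := by
    ext ν
    simp [FiniteMeasure.mass_zero_iff]
  rw [h]
  exact FiniteMeasure.continuous_mass.measurable (measurableSet_singleton 0)

lemma pair_const (ν : FiniteMeasure E) (lam : ℝ) :
    pair ν (fun _ => lam) = (ν.mass : ℝ) * lam := by
  rw [pair, integral_const, smul_eq_mul]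
  congr 1

lemma pair_diracFM (f : E → ℝ) (x : E) : pair (diracFM x) f = f x := by
  show ∫ z, f z ∂(Measure.dirac x) = f x
  exact integral_dirac _ x

lemma pair_zeroFM (f : E → ℝ) : pair (0 : FiniteMeasure E) f = 0 := by
  show ∫ z, f z ∂((0 : FiniteMeasure E) : Measure E) = 0
  rw [FiniteMeasure.toMeasure_zero, integral_zero_measure]

lemma measurable_exp_pair_const (lam : ℝ) :
    Measurable fun ν : FiniteMeasure E => Real.exp (-(pair ν (fun _ => lam))) := by
  simp_rw [pair_const]
  exact Real.measurable_exp.comp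
    (((NNReal.continuous_coe.comp FiniteMeasure.continuous_mass).measurable.mul_const lam).neg)

lemma exp_pair_le_one {ν : FiniteMeasure E} {lam : ℝ} (hlam : 0 ≤ lam) :
    Real.exp (-(pair ν (fun _ => lam))) ≤ 1 := by
  rw [Real.exp_le_one_iff, neg_nonpos, pair_const]
  positivity

lemma integrable_exp_pair (P : Measure (FiniteMeasure E)) [IsProbabilityMeasure P]
    {lam : ℝ} (hlam : 0 ≤ lam) :
    Integrable (fun ν => Real.exp (-(pair ν (fun _ => lam)))) P := by
  refine (integrable_const (1 : ℝ)).mono'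
    (measurable_exp_pair_const lam).aestronglyMeasurable (ae_of_all _ fun ν => ?_)
  rw [Real.norm_eq_abs, abs_of_pos (Real.exp_pos _)]
  exact exp_pair_le_one hlam

lemma intExp_pos (P : Measure (FiniteMeasure E)) [IsProbabilityMeasure P]
    {lam : ℝ} (hlam : 0 ≤ lam) :
    0 < ∫ ν, Real.exp (-(pair ν (fun _ => lam))) ∂P := by
  rw [integral_pos_iff_support_of_nonneg (fun ν => (Real.exp_pos _).le)
    (integrable_exp_pair P hlam)]
  have hsup : (Function.support fun ν : FiniteMeasure E =>
      Real.exp (-(pair ν (fun _ => lam)))) = Set.univ := by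
    ext ν; simp [Function.mem_support, (Real.exp_pos _).ne']
  rw [hsup, measure_univ]
  exact one_pos

lemma intExp_le_one (P : Measure (FiniteMeasure E)) [IsProbabilityMeasure P]
    {lam : ℝ} (hlam : 0 ≤ lam) :
    ∫ ν, Real.exp (-(pair ν (fun _ => lam))) ∂P ≤ 1 := by
  calc ∫ ν, Real.exp (-(pair ν (fun _ => lam))) ∂P ≤ ∫ _ν, (1 : ℝ) ∂P :=
        integral_mono (integrable_exp_pair P hlam) (integrable_const 1)
          (fun ν => exp_pair_le_one hlam)
    _ = 1 := by simp

lemma intExp_anti (P : Measure (FiniteMeasure E)) [IsProbabilityMeasure P]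
    {l1 l2 : ℝ} (h0 : 0 ≤ l1) (h12 : l1 ≤ l2) :
    ∫ ν, Real.exp (-(pair ν (fun _ => l2))) ∂P ≤
      ∫ ν, Real.exp (-(pair ν (fun _ => l1))) ∂P := by
  refine integral_mono (integrable_exp_pair P (h0.trans h12)) (integrable_exp_pair P h0)
    (fun ν => ?_)
  rw [Real.exp_le_exp, neg_le_neg_iff, pair_const, pair_const]
  have : (0:ℝ) ≤ (ν.mass : ℝ) := (ν.mass).coe_nonneg
  nlinarith

end Aux

section Main

variable {E : Type*} [TopologicalSpace E] [MeasurableSpace E] [BorelSpace E]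
    [StandardBorelSpace E]
    [MeasurableSpace (FiniteMeasure E)] [BorelSpace (FiniteMeasure E)]
    {Q : ℝ → FiniteMeasure E → Measure (FiniteMeasure E)} {Vbar : ℝ → E → ℝ}

lemma cumulant_nonneg (hQ : IsMBSemigroup Q) {t : ℝ} (ht : 0 < t) {lam : ℝ} (hlam : 0 ≤ lam)
    (x : E) : 0 ≤ cumulant Q t (fun _ => lam) x := by
  haveI := hQ.prob t ht.le (diracFM x)
  rw [cumulant, neg_nonneg]
  exact Real.log_nonpos (intExp_pos _ hlam).le (intExp_le_one _ hlam)

lemma cumulant_mono (hQ : IsMBSemigroup Q) {t : ℝ} (ht : 0 < t) {l1 l2 : ℝ} (h0 : 0 ≤ l1)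
    (h12 : l1 ≤ l2) (x : E) :
    cumulant Q t (fun _ => l1) x ≤ cumulant Q t (fun _ => l2) x := by
  haveI := hQ.prob t ht.le (diracFM x)
  rw [cumulant, cumulant, neg_le_neg_iff]
  exact Real.log_le_log (intExp_pos _ (h0.trans h12)) (intExp_anti _ h0 h12)

lemma cumulant_le_vbar (hQ : IsMBSemigroup Q) (h26 : Condition26 Q Vbar) {t : ℝ} (ht : 0 < t)
    {lam : ℝ} (hlam : 0 ≤ lam) (x : E) :
    cumulant Q t (fun _ => lam) x ≤ Vbar t x := by
  refine ge_of_tendsto ((h26 t ht).1 x) ?_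
  filter_upwards [eventually_ge_atTop lam] with l hl
  exact cumulant_mono hQ ht hlam hl x

lemma vbar_nonneg (hQ : IsMBSemigroup Q) (h26 : Condition26 Q Vbar) {t : ℝ} (ht : 0 < t)
    (x : E) : 0 ≤ Vbar t x := by
  refine ge_of_tendsto ((h26 t ht).1 x) ?_
  filter_upwards [eventually_ge_atTop (0:ℝ)] with l hl
  exact cumulant_nonneg hQ ht hl x

lemma measurable_cumulant (hQ : IsMBSemigroup Q) {t : ℝ} (ht : 0 < t) (lam : ℝ) :
    Measurable fun x : E => cumulant Q t (fun _ => lam) x := by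
  have hkm : Measurable (Q t) :=
    Measure.measurable_of_measurable_coe _ (fun s hs => hQ.meas t ht.le s hs)
  have hg : Measurable fun ν : FiniteMeasure E =>
      ENNReal.ofReal (Real.exp (-(pair ν (fun _ => lam)))) :=
    ENNReal.measurable_ofReal.comp (measurable_exp_pair_const lam)
  have h1 : Measurable fun x : E =>
      ∫⁻ ν, ENNReal.ofReal (Real.exp (-(pair ν (fun _ => lam)))) ∂(Q t (diracFM x)) :=
    (Measure.measurable_lintegral hg).comp (hkm.comp measurable_diracFM)
  have h2 : ∀ x : E, ∫ ν, Real.exp (-(pair ν (fun _ => lam))) ∂(Q t (diracFM x)) =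
      (∫⁻ ν, ENNReal.ofReal (Real.exp (-(pair ν (fun _ => lam)))) ∂(Q t (diracFM x))).toReal :=
    fun x => integral_eq_lintegral_of_nonneg_ae (ae_of_all _ fun ν => (Real.exp_pos _).le)
      (measurable_exp_pair_const lam).aestronglyMeasurable
  unfold cumulant
  simp_rw [h2]
  exact (Real.measurable_log.comp h1.ennreal_toReal).neg

lemma key_toReal (hQ : IsMBSemigroup Q) (h26 : Condition26 Q Vbar) {t : ℝ} (ht : 0 < t)
    (μ : FiniteMeasure E) :
    (Q t μ {0}).toReal = Real.exp (-(pair μ (Vbar t))) := by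
  haveI := hQ.prob t ht.le μ
  set A : ℝ → ℝ := fun lam => ∫ ν, Real.exp (-(pair ν (fun _ => lam))) ∂(Q t μ) with hA_def
  have hlimA : Tendsto A atTop (𝓝 ((Q t μ {0}).toReal)) := by
    have h0 : (Q t μ {0}).toReal =
        ∫ ν, Set.indicator {(0 : FiniteMeasure E)} (fun _ => (1:ℝ)) ν ∂(Q t μ) := by
      rw [integral_indicator_const _ measurableSet_zeroFM]; simp; rfl
    rw [h0]
    apply tendsto_integral_filter_of_dominated_convergence (fun _ => (1:ℝ))
    · exact Eventually.of_forall fun lam => (measurable_exp_pair_const lam).aestronglyMeasurable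
    · filter_upwards [eventually_ge_atTop (0:ℝ)] with lam hlam
      refine ae_of_all _ fun ν => ?_
      rw [Real.norm_eq_abs, abs_of_pos (Real.exp_pos _)]
      exact exp_pair_le_one hlam
    · exact integrable_const 1
    · refine ae_of_all _ fun ν => ?_
      by_cases hν : ν = 0
      · subst hν
        have : ∀ lam : ℝ, Real.exp (-(pair (0 : FiniteMeasure E) (fun _ => lam))) = 1 := by
          intro lam; rw [pair_const]; simp
        simp_rw [this]
        simpa using tendsto_const_nhds
      · have hm : (0:ℝ) < (ν.mass : ℝ) := by
          have := (FiniteMeasure.mass_nonzero_iff ν).mpr hν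
          positivity
        rw [Set.indicator_of_notMem (show ν ∉ ({0} : Set (FiniteMeasure E)) from hν)]
        simp_rw [pair_const]
        have h1 : Tendsto (fun lam : ℝ => -((ν.mass : ℝ) * lam)) atTop atBot :=
          (tendsto_neg_atTop_atBot).comp (Tendsto.const_mul_atTop hm tendsto_id)
        exact Real.tendsto_exp_atBot.comp h1
  have hlimB : Tendsto (fun lam => pair μ (cumulant Q t (fun _ => lam))) atTop
      (𝓝 (pair μ (Vbar t))) := by
    obtain ⟨C, hC⟩ := (h26 t ht).2
    unfold pair
    apply tendsto_integral_filter_of_dominated_convergence (fun _ => C)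
    · filter_upwards [eventually_ge_atTop (0:ℝ)] with lam _
      exact (measurable_cumulant hQ ht lam).aestronglyMeasurable
    · filter_upwards [eventually_ge_atTop (0:ℝ)] with lam hlam
      refine ae_of_all _ fun x => ?_
      rw [Real.norm_eq_abs, abs_of_nonneg (cumulant_nonneg hQ ht hlam x)]
      exact (cumulant_le_vbar hQ h26 ht hlam x).trans (hC x)
    · exact integrable_const C
    · exact ae_of_all _ fun x => (h26 t ht).1 x
  have hAeq : ∀ᶠ lam in atTop, A lam =
      Real.exp (-(pair μ (cumulant Q t (fun _ => lam)))) := by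
    filter_upwards [eventually_ge_atTop (0:ℝ)] with lam hlam
    exact hQ.branching t ht.le μ _ ⟨measurable_const, ⟨lam, fun _ => le_rfl⟩, fun _ => hlam⟩
  have hlimA' : Tendsto A atTop (𝓝 (Real.exp (-(pair μ (Vbar t))))) := by
    refine Tendsto.congr' (EventuallyEq.symm hAeq) ?_
    exact (Real.continuous_exp.tendsto _).comp hlimB.neg
  exact tendsto_nhds_unique hlimA hlimA'

lemma qzero (hQ : IsMBSemigroup Q) (h26 : Condition26 Q Vbar) {r : ℝ} (hr : 0 ≤ r) :
    Q r (0 : FiniteMeasure E) {0} = 1 := by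
  rcases eq_or_lt_of_le hr with h | h
  · rw [← h, hQ.init 0]
    exact Measure.dirac_apply_of_mem (Set.mem_singleton _)
  · haveI := hQ.prob r h.le (0 : FiniteMeasure E)
    have := key_toReal hQ h26 h (0 : FiniteMeasure E)
    rw [pair_zeroFM] at this
    simp only [neg_zero, Real.exp_zero] at this
    exact (ENNReal.toReal_eq_one_iff _).mp this

lemma qmono (hQ : IsMBSemigroup Q) (h26 : Condition26 Q Vbar) {s t : ℝ} (hs : 0 < s)
    (hst : s ≤ t) (μ : FiniteMeasure E) : Q s μ {0} ≤ Q t μ {0} := by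
  have hts : (0:ℝ) ≤ t - s := by linarith
  have hkm : Measurable (Q (t - s)) :=
    Measure.measurable_of_measurable_coe _ (fun u hu => hQ.meas (t - s) hts u hu)
  have hch := hQ.chapman s hs.le (t - s) hts μ
  rw [show s + (t - s) = t by ring] at hch
  rw [← hch, Measure.bind_apply measurableSet_zeroFM hkm.aemeasurable]
  calc Q s μ {0} = ∫⁻ η, Set.indicator {(0 : FiniteMeasure E)} 1 η ∂(Q s μ) :=
        (lintegral_indicator_one measurableSet_zeroFM).symm
    _ ≤ ∫⁻ η, Q (t - s) η {0} ∂(Q s μ) := by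
        refine lintegral_mono fun η => ?_
        by_cases hη : η = 0
        · subst hη
          rw [Set.indicator_of_mem (Set.mem_singleton (0 : FiniteMeasure E)), qzero hQ h26 hts]
          rfl
        · rw [Set.indicator_of_notMem (show η ∉ ({0} : Set (FiniteMeasure E)) from hη)]
          exact zero_le

lemma vbar_anti (hQ : IsMBSemigroup Q) (h26 : Condition26 Q Vbar) {s t : ℝ} (hs : 0 < s)
    (hst : s ≤ t) (x : E) : Vbar t x ≤ Vbar s x := by
  have ht : 0 < t := hs.trans_le hst
  haveI := hQ.prob s hs.le (diracFM x)
  haveI := hQ.prob t ht.le (diracFM x)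
  have h1 := key_toReal hQ h26 hs (diracFM x)
  have h2 := key_toReal hQ h26 ht (diracFM x)
  rw [pair_diracFM] at h1 h2
  have h3 : (Q s (diracFM x) {0}).toReal ≤ (Q t (diracFM x) {0}).toReal :=
    ENNReal.toReal_mono (measure_ne_top _ _) (qmono hQ h26 hs hst (diracFM x))
  rw [h1, h2] at h3
  have := Real.exp_le_exp.mp h3
  linarith

lemma vbar_measurable (hQ : IsMBSemigroup Q) (h26 : Condition26 Q Vbar) {t : ℝ} (ht : 0 < t) :
    Measurable (Vbar t) := by
  refine measurable_of_tendsto_metrizable' (atTop : Filter ℝ)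
    (fun lam => measurable_cumulant hQ ht lam) ?_
  rw [tendsto_pi_nhds]
  exact (h26 t ht).1

end Main

/-- Corollary 2.10: `‖Q_t(μ,·) - δ₀‖_var = 2(1 - e^{-μ(V̄_t)})`,
and ergodicity to `δ₀` in total variation holds iff `V̄_t(x) → 0` for every `x`. -/
theorem total_variation_to_zero_MB
    {E : Type*} [TopologicalSpace E] [MeasurableSpace E] [BorelSpace E]
    [StandardBorelSpace E]
    [MeasurableSpace (FiniteMeasure E)] [BorelSpace (FiniteMeasure E)]
    (Q : ℝ → FiniteMeasure E → Measure (FiniteMeasure E))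
    (hQ : IsMBSemigroup Q) (Vbar : ℝ → E → ℝ) (h26 : Condition26 Q Vbar) :
    (∀ t, 0 < t → ∀ μ : FiniteMeasure E,
      tvNorm (Q t μ) (Measure.dirac (0 : FiniteMeasure E))
        = 2 * (1 - Real.exp (-(pair μ (Vbar t))))) ∧
    ((∀ μ : FiniteMeasure E,
        Tendsto (fun t => tvNorm (Q t μ) (Measure.dirac (0 : FiniteMeasure E)))
          atTop (𝓝 0)) ↔
      ∀ x : E, Tendsto (fun t => Vbar t x) atTop (𝓝 0)) := by
  have part1 : ∀ t, 0 < t → ∀ μ : FiniteMeasure E,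
      tvNorm (Q t μ) (Measure.dirac (0 : FiniteMeasure E))
        = 2 * (1 - Real.exp (-(pair μ (Vbar t)))) := by
    intro t ht μ
    haveI := hQ.prob t ht.le μ
    rw [tvNorm_dirac (Q t μ) (0 : FiniteMeasure E) measurableSet_zeroFM,
      key_toReal hQ h26 ht μ]
  refine ⟨part1, ?_, ?_⟩
  · intro h x
    have h1 := h (diracFM x)
    have h2 : (fun t => tvNorm (Q t (diracFM x)) (Measure.dirac (0 : FiniteMeasure E)))
        =ᶠ[atTop] fun t => 2 * (1 - Real.exp (-(Vbar t x))) := by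
      filter_upwards [eventually_gt_atTop (0:ℝ)] with t ht
      rw [part1 t ht (diracFM x), pair_diracFM]
    have h3 : Tendsto (fun t => 2 * (1 - Real.exp (-(Vbar t x)))) atTop (𝓝 0) :=
      Tendsto.congr' h2 h1
    have h4 : Tendsto (fun t => Real.exp (-(Vbar t x))) atTop (𝓝 1) := by
      have h5 : Tendsto (fun t => 1 - 2 * (1 - Real.exp (-(Vbar t x))) / 2) atTop
          (𝓝 (1 - 0 / 2)) := tendsto_const_nhds.sub (h3.div_const 2)
      have he : (fun t => 1 - 2 * (1 - Real.exp (-(Vbar t x))) / 2)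
          = fun t => Real.exp (-(Vbar t x)) := by funext t; ring
      rw [he] at h5
      simpa using h5
    have h6 := (Real.continuousAt_log one_ne_zero).tendsto.comp h4
    simp only [Function.comp_def, Real.log_exp, Real.log_one] at h6
    simpa using h6.neg
  · intro h μ
    have key2 : Tendsto (fun t => pair μ (Vbar t)) atTop (𝓝 0) := by
      have hT : Tendsto (fun t => ∫ x, Vbar t x ∂(μ : Measure E)) atTop
          (𝓝 (∫ _x, (0:ℝ) ∂(μ : Measure E))) := by
        apply tendsto_integral_filter_of_dominated_convergence (Vbar 1)
        · filter_upwards [eventually_gt_atTop (0:ℝ)] with t ht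
          exact (vbar_measurable hQ h26 ht).aestronglyMeasurable
        · filter_upwards [eventually_ge_atTop (1:ℝ)] with t ht
          refine ae_of_all _ fun x => ?_
          rw [Real.norm_eq_abs, abs_of_nonneg (vbar_nonneg hQ h26 (by linarith) x)]
          exact vbar_anti hQ h26 one_pos ht x
        · obtain ⟨C, hC⟩ := (h26 1 one_pos).2
          refine (integrable_const C).mono'
            (vbar_measurable hQ h26 one_pos).aestronglyMeasurable (ae_of_all _ fun x => ?_)
          rw [Real.norm_eq_abs, abs_of_nonneg (vbar_nonneg hQ h26 one_pos x)]
          exact hC x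
        · exact ae_of_all _ fun x => h x
      simpa [pair] using hT
    have hfin : Tendsto (fun t => 2 * (1 - Real.exp (-(pair μ (Vbar t))))) atTop (𝓝 0) := by
      have h7 : Tendsto (fun t => 2 * (1 - Real.exp (-(pair μ (Vbar t))))) atTop
          (𝓝 (2 * (1 - Real.exp (-(0:ℝ))))) :=
        (tendsto_const_nhds.sub ((Real.continuous_exp.tendsto _).comp key2.neg)).const_mul 2
      simpa using h7
    refine Tendsto.congr' ?_ hfin
    filter_upwards [eventually_gt_atTop (0:ℝ)] with t ht
    exact (part1 t ht μ).symm


end DW
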